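/- For every integer n ≥ 1: n²(n−1)σ₁(n) + ∑_{m=1}^{n−1} 12m(5m−3n)σ₁(m)σ₁(n−m) = 0, where σ₁(k) = ∑_{d|k} d. -/
import Mathlib

open Finset

namespace ChazyAux

abbrev Q4 := ℕ × ℕ × ℕ × ℕ

def tw (q : Q4) : ℤ :=
  24*(q.1:ℤ)^2*(q.2.1:ℤ)^3*(q.2.2.2:ℤ) - 36*(q.1:ℤ)*(q.2.1:ℤ)^2*(q.2.2.1:ℤ)*(q.2.2.2:ℤ)^2

def w1 (q : Q4) : ℤ :=
  2*(q.2.2.1:ℤ)^2*(q.2.2.2:ℤ)^4 - 2*(q.2.2.1:ℤ)^4*(q.2.2.2:ℤ)^2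
  + 12*(q.2.1:ℤ)*(q.2.2.1:ℤ)^2*(q.2.2.2:ℤ)^3 - 20*(q.2.1:ℤ)*(q.2.2.1:ℤ)^4*(q.2.2.2:ℤ)
  - 30*(q.2.1:ℤ)^2*(q.2.2.1:ℤ)^4
  - 16*(q.1:ℤ)*(q.2.1:ℤ)*(q.2.2.1:ℤ)*(q.2.2.2:ℤ)^3
  + 16*(q.1:ℤ)*(q.2.1:ℤ)*(q.2.2.1:ℤ)^3*(q.2.2.2:ℤ)
  - 36*(q.1:ℤ)*(q.2.1:ℤ)^2*(q.2.2.1:ℤ)*(q.2.2.2:ℤ)^2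
  + 40*(q.1:ℤ)*(q.2.1:ℤ)^2*(q.2.2.1:ℤ)^3
  + 12*(q.1:ℤ)^2*(q.2.1:ℤ)^2*(q.2.2.2:ℤ)^2
  - 12*(q.1:ℤ)^2*(q.2.1:ℤ)^2*(q.2.2.1:ℤ)^2
  + 12*(q.1:ℤ)^2*(q.2.1:ℤ)^3*(q.2.2.2:ℤ)

def vv (q : Q4) : ℤ :=
  -2*(q.2.2.1:ℤ)^2*(q.2.2.2:ℤ)^4 + 12*(q.2.1:ℤ)*(q.2.2.1:ℤ)^2*(q.2.2.2:ℤ)^3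
  - 12*(q.2.1:ℤ)^2*(q.2.2.1:ℤ)^2*(q.2.2.2:ℤ)^2
  + 16*(q.1:ℤ)*(q.2.1:ℤ)*(q.2.2.1:ℤ)*(q.2.2.2:ℤ)^3
  - 36*(q.1:ℤ)*(q.2.1:ℤ)^2*(q.2.2.1:ℤ)*(q.2.2.2:ℤ)^2
  + 16*(q.1:ℤ)*(q.2.1:ℤ)^3*(q.2.2.1:ℤ)*(q.2.2.2:ℤ)
  - 12*(q.1:ℤ)^2*(q.2.1:ℤ)^2*(q.2.2.2:ℤ)^2
  + 12*(q.1:ℤ)^2*(q.2.1:ℤ)^3*(q.2.2.2:ℤ)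
  - 2*(q.1:ℤ)^2*(q.2.1:ℤ)^4

def tauM (q : Q4) : Q4 := (q.2.2.1, q.2.2.2, q.1, q.2.1)
def rhoM (q : Q4) : Q4 := (q.2.2.2, q.2.2.1, q.2.1, q.1)
def muM (q : Q4) : Q4 := (q.2.2.2 + q.2.1, q.2.2.1, q.2.1, q.1 - q.2.2.1)

def X (n : ℕ) : Finset Q4 :=
  ((range (n+1)) ×ˢ (range (n+1)) ×ˢ (range (n+1)) ×ˢ (range (n+1))).filter
    (fun q => q.1 * q.2.1 + q.2.2.1 * q.2.2.2 = n ∧ 0 < q.1 ∧ 0 < q.2.1 ∧ 0 < q.2.2.1 ∧ 0 < q.2.2.2)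

lemma mem_X {n : ℕ} {q : Q4} :
    q ∈ X n ↔ q.1 * q.2.1 + q.2.2.1 * q.2.2.2 = n ∧
      0 < q.1 ∧ 0 < q.2.1 ∧ 0 < q.2.2.1 ∧ 0 < q.2.2.2 := by
  obtain ⟨a, b, c, d⟩ := q
  simp only [X, mem_filter, mem_product, mem_range]
  constructor
  · tauto
  · rintro ⟨h, ha, hb, hc, hd⟩
    refine ⟨⟨?_, ?_, ?_, ?_⟩, h, ha, hb, hc, hd⟩ <;> nlinarith

lemma sum_split {α : Type*} [DecidableEq α] (s : Finset α) (f : α → ℤ) (g h : α → ℕ) :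
    ∑ x ∈ s, f x
      = ∑ x ∈ s.filter (fun x => h x < g x), f x
        + ∑ x ∈ s.filter (fun x => g x < h x), f x
        + ∑ x ∈ s.filter (fun x => g x = h x), f x := by
  rw [← Finset.sum_filter_add_sum_filter_not s (fun x => h x < g x) f,
      ← Finset.sum_filter_add_sum_filter_not (s.filter (fun x => ¬ h x < g x))
        (fun x => g x < h x) f, Finset.filter_filter, Finset.filter_filter, add_assoc]
  congr 1
  congr 1
  · apply Finset.sum_congr _ (fun _ _ => rfl)
    apply Finset.filter_congr
    intro x _
    constructor
    · rintro ⟨_, h2⟩; exact h2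
    · intro h2; omega
  · apply Finset.sum_congr _ (fun _ _ => rfl)
    apply Finset.filter_congr
    intro x _
    constructor
    · rintro ⟨h1, h2⟩; omega
    · intro h2; omega


lemma vv_tau (q : Q4) : vv (tauM q) = vv q := by
  obtain ⟨a, b, c, d⟩ := q
  simp only [vv, tauM]
  ring

lemma sum_tau_ac (n : ℕ) (f : Q4 → ℤ) :
    ∑ q ∈ (X n).filter (fun q => q.1 < q.2.2.1), f q
      = ∑ q ∈ (X n).filter (fun q => q.2.2.1 < q.1), f (tauM q) := by
  refine Finset.sum_nbij' tauM tauM ?_ ?_ ?_ ?_ ?_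
  · rintro ⟨a, b, c, d⟩ hq
    simp only [mem_filter, mem_X, tauM] at hq ⊢
    refine ⟨⟨by linarith [hq.1.1], hq.1.2.2.2.1, hq.1.2.2.2.2, hq.1.2.1, hq.1.2.2.1⟩, hq.2⟩
  · rintro ⟨a, b, c, d⟩ hq
    simp only [mem_filter, mem_X, tauM] at hq ⊢
    refine ⟨⟨by linarith [hq.1.1], hq.1.2.2.2.1, hq.1.2.2.2.2, hq.1.2.1, hq.1.2.2.1⟩, hq.2⟩
  · intro q _; rfl
  · intro q _; rfl
  · intro q _; rfl

lemma sum_tau_bd (n : ℕ) (f : Q4 → ℤ) :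
    ∑ q ∈ (X n).filter (fun q => q.2.2.2 < q.2.1), f q
      = ∑ q ∈ (X n).filter (fun q => q.2.1 < q.2.2.2), f (tauM q) := by
  refine Finset.sum_nbij' tauM tauM ?_ ?_ ?_ ?_ ?_
  · rintro ⟨a, b, c, d⟩ hq
    simp only [mem_filter, mem_X, tauM] at hq ⊢
    refine ⟨⟨by linarith [hq.1.1], hq.1.2.2.2.1, hq.1.2.2.2.2, hq.1.2.1, hq.1.2.2.1⟩, hq.2⟩
  · rintro ⟨a, b, c, d⟩ hq
    simp only [mem_filter, mem_X, tauM] at hq ⊢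
    refine ⟨⟨by linarith [hq.1.1], hq.1.2.2.2.1, hq.1.2.2.2.2, hq.1.2.1, hq.1.2.2.1⟩, hq.2⟩
  · intro q _; rfl
  · intro q _; rfl
  · intro q _; rfl

lemma sum_mu (n : ℕ) :
    ∑ q ∈ (X n).filter (fun q => q.2.2.1 < q.1), w1 (muM q)
      = ∑ q ∈ (X n).filter (fun q => q.2.2.1 < q.1), w1 q := by
  refine Finset.sum_nbij' muM muM ?_ ?_ ?_ ?_ ?_
  · rintro ⟨a, b, c, d⟩ hq
    simp only [mem_filter, mem_X, muM] at hq ⊢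
    obtain ⟨⟨hprod, ha, hb, hc, hd⟩, hca⟩ := hq
    have hca' : c ≤ a := le_of_lt hca
    refine ⟨⟨?_, by omega, hc, hb, by omega⟩, by omega⟩
    zify [hca']
    have : (a : ℤ) * b + c * d = n := by exact_mod_cast hprod
    linear_combination this
  · rintro ⟨a, b, c, d⟩ hq
    simp only [mem_filter, mem_X, muM] at hq ⊢
    obtain ⟨⟨hprod, ha, hb, hc, hd⟩, hca⟩ := hq
    have hca' : c ≤ a := le_of_lt hca
    refine ⟨⟨?_, by omega, hc, hb, by omega⟩, by omega⟩
    zify [hca']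
    have : (a : ℤ) * b + c * d = n := by exact_mod_cast hprod
    linear_combination this
  · rintro ⟨a, b, c, d⟩ hq
    simp only [mem_filter, mem_X, muM] at hq
    simp only [muM, Prod.mk.injEq, and_true, true_and]
    omega
  · rintro ⟨a, b, c, d⟩ hq
    simp only [mem_filter, mem_X, muM] at hq
    simp only [muM, Prod.mk.injEq, and_true, true_and]
    omega
  · intro q _; rfl

lemma sum_rho (n : ℕ) :
    ∑ q ∈ (X n).filter (fun q => q.2.2.1 < q.1), vv (rhoM q)
      = ∑ q ∈ (X n).filter (fun q => q.2.1 < q.2.2.2), vv q := by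
  refine Finset.sum_nbij' rhoM rhoM ?_ ?_ ?_ ?_ ?_
  · rintro ⟨a, b, c, d⟩ hq
    simp only [mem_filter, mem_X, rhoM] at hq ⊢
    refine ⟨⟨by linarith [hq.1.1], hq.1.2.2.2.2, hq.1.2.2.2.1, hq.1.2.2.1, hq.1.2.1⟩, hq.2⟩
  · rintro ⟨a, b, c, d⟩ hq
    simp only [mem_filter, mem_X, rhoM] at hq ⊢
    refine ⟨⟨by linarith [hq.1.1], hq.1.2.2.2.2, hq.1.2.2.2.1, hq.1.2.2.1, hq.1.2.1⟩, hq.2⟩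
  · intro q _; rfl
  · intro q _; rfl
  · intro q _; rfl

lemma key_identity (q : Q4) (h : q.2.2.1 ≤ q.1) :
    tw q + tw (tauM q) = w1 q - w1 (muM q) + (vv q - vv (rhoM q)) := by
  obtain ⟨a, b, c, d⟩ := q
  simp only at h
  simp only [tw, w1, vv, tauM, muM, rhoM]
  push_cast [Nat.cast_sub h]
  ring


lemma sum_diag1 (n : ℕ) (f : Q4 → ℤ) :
    ∑ q ∈ (X n).filter (fun q => q.1 = q.2.2.1), f q
      = ∑ p ∈ n.divisorsAntidiagonal, ∑ b ∈ Ico 1 p.2, f (p.1, b, p.1, p.2 - b) := by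
  rw [← Finset.sum_sigma n.divisorsAntidiagonal (fun p => Ico 1 p.2)
      (fun x => f (x.1.1, x.2, x.1.1, x.1.2 - x.2))]
  refine Finset.sum_nbij' (fun q => ⟨(q.1, q.2.1 + q.2.2.2), q.2.1⟩)
    (fun x => (x.1.1, x.2, x.1.1, x.1.2 - x.2)) ?_ ?_ ?_ ?_ ?_
  · rintro ⟨a, b, c, d⟩ hq
    simp only [mem_filter, mem_X] at hq
    obtain ⟨⟨hprod, ha, hb, hc, hd⟩, hac⟩ := hq
    simp only [Finset.mem_sigma, Nat.mem_divisorsAntidiagonal, mem_Ico]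
    subst hac
    have h1 : a * (b + d) = n := by rw [Nat.mul_add]; exact hprod
    have h2 := Nat.mul_pos ha hb
    refine ⟨⟨h1, by omega⟩, by omega, by omega⟩
  · rintro ⟨⟨e, fv⟩, b⟩ hx
    simp only [Finset.mem_sigma, Nat.mem_divisorsAntidiagonal, mem_Ico] at hx
    obtain ⟨⟨hef, hn0⟩, hb1, hbf⟩ := hx
    simp only [mem_filter, mem_X]
    have he : 0 < e := by
      rcases Nat.eq_zero_or_pos e with h | h
      · subst h; simp only [Nat.zero_mul] at hef; omega
      · exact h
    have h1 : e * b + e * (fv - b) = n := by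
      rw [← Nat.mul_add, show b + (fv - b) = fv by omega]; exact hef
    exact ⟨⟨h1, he, by omega, he, by omega⟩, by trivial⟩
  · rintro ⟨a, b, c, d⟩ hq
    simp only [mem_filter, mem_X] at hq
    show ((a : ℕ), b, a, (b + d) - b) = (a, b, c, d)
    have : c = a := hq.2.symm
    simp only [Prod.mk.injEq, true_and]
    omega
  · rintro ⟨⟨e, fv⟩, b⟩ hx
    simp only [Finset.mem_sigma, Nat.mem_divisorsAntidiagonal, mem_Ico] at hx
    show (⟨(e, b + (fv - b)), b⟩ : Σ _ : ℕ × ℕ, ℕ) = ⟨(e, fv), b⟩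
    rw [show b + (fv - b) = fv by omega]
  · rintro ⟨a, b, c, d⟩ hq
    simp only [mem_filter, mem_X] at hq
    show f (a, b, c, d) = f (a, b, a, (b + d) - b)
    have h : ((a : ℕ), b, c, d) = (a, b, a, (b + d) - b) := by
      simp only [Prod.mk.injEq, true_and]
      omega
    exact congrArg f h

lemma sum_diag2 (n : ℕ) (f : Q4 → ℤ) :
    ∑ q ∈ (X n).filter (fun q => q.2.2.2 = q.2.1), f q
      = ∑ p ∈ n.divisorsAntidiagonal, ∑ b ∈ Ico 1 p.2, f (b, p.1, p.2 - b, p.1) := by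
  rw [← Finset.sum_sigma n.divisorsAntidiagonal (fun p => Ico 1 p.2)
      (fun x => f (x.2, x.1.1, x.1.2 - x.2, x.1.1))]
  refine Finset.sum_nbij' (fun q => ⟨(q.2.1, q.1 + q.2.2.1), q.1⟩)
    (fun x => (x.2, x.1.1, x.1.2 - x.2, x.1.1)) ?_ ?_ ?_ ?_ ?_
  · rintro ⟨a, b, c, d⟩ hq
    simp only [mem_filter, mem_X] at hq
    obtain ⟨⟨hprod, ha, hb, hc, hd⟩, hdb⟩ := hq
    simp only [Finset.mem_sigma, Nat.mem_divisorsAntidiagonal, mem_Ico]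
    rw [hdb] at hprod
    have h1 : b * (a + c) = n := by
      rw [Nat.mul_add, Nat.mul_comm b a, Nat.mul_comm b c]; exact hprod
    have h2 := Nat.mul_pos ha hb
    refine ⟨⟨h1, by omega⟩, by omega, by omega⟩
  · rintro ⟨⟨e, fv⟩, b⟩ hx
    simp only [Finset.mem_sigma, Nat.mem_divisorsAntidiagonal, mem_Ico] at hx
    obtain ⟨⟨hef, hn0⟩, hb1, hbf⟩ := hx
    simp only [mem_filter, mem_X]
    have he : 0 < e := by
      rcases Nat.eq_zero_or_pos e with h | h
      · subst h; simp only [Nat.zero_mul] at hef; omega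
      · exact h
    have h1 : b * e + (fv - b) * e = n := by
      rw [Nat.mul_comm b e, Nat.mul_comm (fv - b) e, ← Nat.mul_add,
        show b + (fv - b) = fv by omega]
      exact hef
    exact ⟨⟨h1, by omega, he, by omega, he⟩, by trivial⟩
  · rintro ⟨a, b, c, d⟩ hq
    simp only [mem_filter, mem_X] at hq
    show ((a : ℕ), b, (a + c) - a, b) = (a, b, c, d)
    have : d = b := hq.2
    simp only [Prod.mk.injEq, true_and]
    omega
  · rintro ⟨⟨e, fv⟩, b⟩ hx
    simp only [Finset.mem_sigma, Nat.mem_divisorsAntidiagonal, mem_Ico] at hx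
    show (⟨(e, b + (fv - b)), b⟩ : Σ _ : ℕ × ℕ, ℕ) = ⟨(e, fv), b⟩
    rw [show b + (fv - b) = fv by omega]
  · rintro ⟨a, b, c, d⟩ hq
    simp only [mem_filter, mem_X] at hq
    show f (a, b, c, d) = f (a, b, (a + c) - a, b)
    have h : ((a : ℕ), b, c, d) = (a, b, (a + c) - a, b) := by
      simp only [Prod.mk.injEq, true_and]
      omega
    exact congrArg f h


lemma ps0 (f : ℕ) (hf : 1 ≤ f) : ∑ _b ∈ Ico 1 f, (1 : ℚ) = (f : ℚ) - 1 := by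
  induction f, hf using Nat.le_induction with
  | base => simp
  | succ f hf ih =>
    rw [Finset.sum_Ico_succ_top hf, ih]
    push_cast
    ring

lemma ps1 (f : ℕ) (hf : 1 ≤ f) :
    ∑ b ∈ Ico 1 f, (b : ℚ) = ((f : ℚ)^2 - f) / 2 := by
  induction f, hf using Nat.le_induction with
  | base => norm_num
  | succ f hf ih =>
    rw [Finset.sum_Ico_succ_top hf, ih]
    push_cast
    ring

lemma ps2 (f : ℕ) (hf : 1 ≤ f) :
    ∑ b ∈ Ico 1 f, (b : ℚ)^2 = (2*(f : ℚ)^3 - 3*(f : ℚ)^2 + f) / 6 := by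
  induction f, hf using Nat.le_induction with
  | base => norm_num
  | succ f hf ih =>
    rw [Finset.sum_Ico_succ_top hf, ih]
    push_cast
    ring

lemma ps3 (f : ℕ) (hf : 1 ≤ f) :
    ∑ b ∈ Ico 1 f, (b : ℚ)^3 = ((f : ℚ)^4 - 2*(f : ℚ)^3 + (f : ℚ)^2) / 4 := by
  induction f, hf using Nat.le_induction with
  | base => norm_num
  | succ f hf ih =>
    rw [Finset.sum_Ico_succ_top hf, ih]
    push_cast
    ring

lemma inner_sum (e f : ℕ) (hf : 1 ≤ f) :
    ∑ b ∈ Ico 1 f, (2 * tw (e, b, e, f - b) - vv (e, b, e, f - b) + vv (b, e, f - b, e))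
      = 2*(e:ℤ)^2*(f:ℤ)^3 - 2*(e:ℤ)^2*(f:ℤ)^4 + 2*(e:ℤ)^4*(f:ℤ)^2 - 2*(e:ℤ)^4*(f:ℤ)^3 := by
  have key : ∀ b ∈ Ico 1 f,
      ((2 * tw (e, b, e, f - b) - vv (e, b, e, f - b) + vv (b, e, f - b, e) : ℤ) : ℚ)
        = (2*(e:ℚ)^2*(f:ℚ)^4 - 2*(e:ℚ)^4*(f:ℚ)^2) * 1
          + (-36*(e:ℚ)^2*(f:ℚ)^3) * (b:ℚ)
          + (84*(e:ℚ)^2*(f:ℚ)^2) * (b:ℚ)^2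
          + (-48*(e:ℚ)^2*(f:ℚ)) * (b:ℚ)^3 := by
    intro b hb
    have hb' := mem_Ico.mp hb
    have hble : b ≤ f := le_of_lt hb'.2
    simp only [tw, vv]
    push_cast [Nat.cast_sub hble]
    ring
  have hQ : ∑ b ∈ Ico 1 f,
      ((2 * tw (e, b, e, f - b) - vv (e, b, e, f - b) + vv (b, e, f - b, e) : ℤ) : ℚ)
        = 2*(e:ℚ)^2*(f:ℚ)^3 - 2*(e:ℚ)^2*(f:ℚ)^4 + 2*(e:ℚ)^4*(f:ℚ)^2 - 2*(e:ℚ)^4*(f:ℚ)^3 := by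
    rw [Finset.sum_congr rfl key]
    simp only [Finset.sum_add_distrib, ← Finset.mul_sum]
    rw [ps0 f hf, ps1 f hf, ps2 f hf, ps3 f hf]
    ring
  exact_mod_cast hQ


lemma hsigma (k : ℕ) : ((ArithmeticFunction.sigma 1 k : ℕ) : ℤ)
    = ∑ p ∈ k.divisorsAntidiagonal, (p.2 : ℤ) := by
  rw [ArithmeticFunction.sigma_one_apply]
  push_cast
  exact (Nat.sum_divisorsAntidiagonal' (fun _ j => (j : ℤ))).symm

lemma stepA (n : ℕ) :
    ∑ m ∈ Finset.Ico 1 n,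
        12 * (m : ℤ) * (5 * (m : ℤ) - 3 * (n : ℤ)) *
          (ArithmeticFunction.sigma 1 m : ℤ) * (ArithmeticFunction.sigma 1 (n - m) : ℤ)
      = ∑ q ∈ X n, tw q := by
  have h1 : ∀ m ∈ Ico 1 n,
      12 * (m : ℤ) * (5 * (m : ℤ) - 3 * (n : ℤ)) *
          (ArithmeticFunction.sigma 1 m : ℤ) * (ArithmeticFunction.sigma 1 (n - m) : ℤ)
        = ∑ z ∈ m.divisorsAntidiagonal ×ˢ (n - m).divisorsAntidiagonal,
            12 * (m : ℤ) * (5 * (m : ℤ) - 3 * (n : ℤ)) * (z.1.2 : ℤ) * (z.2.2 : ℤ) := by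
    intro m _
    rw [hsigma m, hsigma (n - m), Finset.sum_product]
    simp only [Finset.mul_sum, Finset.sum_mul]
    rw [Finset.sum_comm]
  rw [Finset.sum_congr rfl h1,
    ← Finset.sum_sigma (Ico 1 n) (fun m => m.divisorsAntidiagonal ×ˢ (n - m).divisorsAntidiagonal)
      (fun x => 12 * (x.1 : ℤ) * (5 * (x.1 : ℤ) - 3 * (n : ℤ)) * (x.2.1.2 : ℤ) * (x.2.2.2 : ℤ))]
  refine Finset.sum_nbij' (fun x => (x.2.1.1, x.2.1.2, x.2.2.1, x.2.2.2))
    (fun q => ⟨q.1 * q.2.1, ((q.1, q.2.1), (q.2.2.1, q.2.2.2))⟩) ?_ ?_ ?_ ?_ ?_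
  · rintro ⟨m, ⟨⟨a, b⟩, ⟨c, d⟩⟩⟩ hx
    simp only [Finset.mem_sigma, Finset.mem_product, Nat.mem_divisorsAntidiagonal, mem_Ico] at hx
    obtain ⟨⟨hm1, hm2⟩, ⟨hab, hab0⟩, ⟨hcd, hcd0⟩⟩ := hx
    simp only [mem_X]
    have ha : 0 < a := by rcases Nat.eq_zero_or_pos a with h | h; · subst h; simp at hab; omega
                          · exact h
    have hb : 0 < b := by rcases Nat.eq_zero_or_pos b with h | h; · subst h; simp at hab; omega
                          · exact h
    have hc : 0 < c := by rcases Nat.eq_zero_or_pos c with h | h; · subst h; simp at hcd; omega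
                          · exact h
    have hd : 0 < d := by rcases Nat.eq_zero_or_pos d with h | h; · subst h; simp at hcd; omega
                          · exact h
    refine ⟨by rw [hab, hcd]; omega, ha, hb, hc, hd⟩
  · rintro ⟨a, b, c, d⟩ hq
    simp only [mem_X] at hq
    obtain ⟨hprod, ha, hb, hc, hd⟩ := hq
    simp only [Finset.mem_sigma, Finset.mem_product, Nat.mem_divisorsAntidiagonal, mem_Ico]
    have h1 : 1 ≤ a * b := Nat.mul_pos ha hb
    have h2 : 1 ≤ c * d := Nat.mul_pos hc hd
    refine ⟨⟨h1, by omega⟩, ⟨by trivial, by omega⟩, ⟨by omega, by omega⟩⟩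
  · rintro ⟨m, ⟨⟨a, b⟩, ⟨c, d⟩⟩⟩ hx
    simp only [Finset.mem_sigma, Finset.mem_product, Nat.mem_divisorsAntidiagonal, mem_Ico] at hx
    obtain ⟨_, ⟨hab, _⟩, _⟩ := hx
    subst hab
    rfl
  · rintro ⟨a, b, c, d⟩ _
    rfl
  · rintro ⟨m, ⟨⟨a, b⟩, ⟨c, d⟩⟩⟩ hx
    simp only [Finset.mem_sigma, Finset.mem_product, Nat.mem_divisorsAntidiagonal, mem_Ico] at hx
    obtain ⟨⟨hm1, hm2⟩, ⟨hab, hab0⟩, ⟨hcd, hcd0⟩⟩ := hx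
    have hn' : (n : ℤ) = (a : ℤ) * b + (c : ℤ) * d := by
      have : a * b + c * d = n := by rw [hab, hcd]; omega
      exact_mod_cast this.symm
    subst hab
    show 12 * ((a*b : ℕ) : ℤ) * (5 * ((a*b : ℕ) : ℤ) - 3 * (n : ℤ)) * (b : ℤ) * (d : ℤ)
      = tw (a, b, c, d)
    simp only [tw]
    push_cast
    linear_combination (-36 * (a:ℤ) * (b:ℤ)^2 * (d:ℤ)) * hn'


lemma sum_X_tw (n : ℕ) :
    2 * ∑ q ∈ X n, tw q
      = -2 * (n : ℤ)^2 * ((n : ℤ) - 1) * (ArithmeticFunction.sigma 1 n : ℤ) := by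
  classical
  -- split on a vs c
  have hsplit1 := sum_split (X n) tw (fun q => q.1) (fun q => q.2.2.1)
  have hsplitV1 := sum_split (X n) vv (fun q => q.1) (fun q => q.2.2.1)
  have hsplitV2 := sum_split (X n) vv (fun q => q.2.2.2) (fun q => q.2.1)
  -- reflect the a<c part
  have htau1 := sum_tau_ac n tw
  have htauV1 := sum_tau_ac n vv
  have htauV2 := sum_tau_bd n vv
  -- vv is tau-invariant
  have hVtau : ∀ q : Q4, vv (tauM q) = vv q := vv_tau
  have htauV1' : ∑ q ∈ (X n).filter (fun q => q.1 < q.2.2.1), vv q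
      = ∑ q ∈ (X n).filter (fun q => q.2.2.1 < q.1), vv q := by
    rw [htauV1]; exact Finset.sum_congr rfl (fun q _ => hVtau q)
  have htauV2' : ∑ q ∈ (X n).filter (fun q => q.2.2.2 < q.2.1), vv q
      = ∑ q ∈ (X n).filter (fun q => q.2.1 < q.2.2.2), vv q := by
    rw [htauV2]; exact Finset.sum_congr rfl (fun q _ => hVtau q)
  -- the key pointwise identity on Y
  have hkey : ∑ q ∈ (X n).filter (fun q => q.2.2.1 < q.1), (tw q + tw (tauM q))
      = ∑ q ∈ (X n).filter (fun q => q.2.2.1 < q.1),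
          (w1 q - w1 (muM q) + (vv q - vv (rhoM q))) := by
    apply Finset.sum_congr rfl
    intro q hq
    have h : q.2.2.1 ≤ q.1 := le_of_lt (Finset.mem_filter.mp hq).2
    exact key_identity q h
  have hmu := sum_mu n
  have hrho := sum_rho n
  -- expand hkey
  have hkey2 : ∑ q ∈ (X n).filter (fun q => q.2.2.1 < q.1), tw q
        + ∑ q ∈ (X n).filter (fun q => q.2.2.1 < q.1), tw (tauM q)
      = ∑ q ∈ (X n).filter (fun q => q.2.2.1 < q.1), vv q
        - ∑ q ∈ (X n).filter (fun q => q.2.1 < q.2.2.2), vv q := by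
    have e1 := Finset.sum_add_distrib (s := (X n).filter (fun q => q.2.2.1 < q.1))
      (f := tw) (g := fun q => tw (tauM q))
    rw [← e1, hkey]
    simp only [Finset.sum_add_distrib, Finset.sum_sub_distrib]
    rw [hmu, hrho]
    ring
  -- diagonal rewrites
  have hD1t := sum_diag1 n tw
  have hD1v := sum_diag1 n vv
  have hD2v := sum_diag2 n vv
  -- combine diagonals with inner_sum
  have hdiag : 2 * (∑ q ∈ (X n).filter (fun q => q.1 = q.2.2.1), tw q)
        - (∑ q ∈ (X n).filter (fun q => q.1 = q.2.2.1), vv q)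
        + (∑ q ∈ (X n).filter (fun q => q.2.2.2 = q.2.1), vv q)
      = ∑ p ∈ n.divisorsAntidiagonal,
          (2*(p.1:ℤ)^2*(p.2:ℤ)^3 - 2*(p.1:ℤ)^2*(p.2:ℤ)^4
            + 2*(p.1:ℤ)^4*(p.2:ℤ)^2 - 2*(p.1:ℤ)^4*(p.2:ℤ)^3) := by
    rw [hD1t, hD1v, hD2v, Finset.mul_sum, ← Finset.sum_sub_distrib, ← Finset.sum_add_distrib]
    apply Finset.sum_congr rfl
    intro p hp
    have hp' := Nat.mem_divisorsAntidiagonal.mp hp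
    have hf : 1 ≤ p.2 := by
      rcases Nat.eq_zero_or_pos p.2 with h | h
      · rw [h, Nat.mul_zero] at hp'; omega
      · exact h
    rw [Finset.mul_sum, ← Finset.sum_sub_distrib, ← Finset.sum_add_distrib]
    rw [← inner_sum p.1 p.2 hf]
  -- evaluate the divisor sum
  have hdivsum : ∑ p ∈ n.divisorsAntidiagonal,
        (2*(p.1:ℤ)^2*(p.2:ℤ)^3 - 2*(p.1:ℤ)^2*(p.2:ℤ)^4
          + 2*(p.1:ℤ)^4*(p.2:ℤ)^2 - 2*(p.1:ℤ)^4*(p.2:ℤ)^3)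
      = -2 * (n : ℤ)^2 * ((n : ℤ) - 1) * (ArithmeticFunction.sigma 1 n : ℤ) := by
    have hptwise : ∀ p ∈ n.divisorsAntidiagonal,
        (2*(p.1:ℤ)^2*(p.2:ℤ)^3 - 2*(p.1:ℤ)^2*(p.2:ℤ)^4
          + 2*(p.1:ℤ)^4*(p.2:ℤ)^2 - 2*(p.1:ℤ)^4*(p.2:ℤ)^3)
          = -2 * (n:ℤ)^2 * ((n:ℤ) - 1) * (p.1:ℤ)
            + ((2*(p.1:ℤ)^2*(p.2:ℤ)^3 - 2*(p.1:ℤ)^2*(p.2:ℤ)^4)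
              - (2*(p.2:ℤ)^2*(p.1:ℤ)^3 - 2*(p.2:ℤ)^2*(p.1:ℤ)^4)) := by
      intro p hp
      have hp' := Nat.mem_divisorsAntidiagonal.mp hp
      have hpz : (p.1 : ℤ) * (p.2 : ℤ) = (n : ℤ) := by exact_mod_cast hp'.1
      rw [← hpz]
      ring
    rw [Finset.sum_congr rfl hptwise, Finset.sum_add_distrib, Finset.sum_sub_distrib]
    have hswap : ∑ p ∈ n.divisorsAntidiagonal,
          (2*(p.1:ℤ)^2*(p.2:ℤ)^3 - 2*(p.1:ℤ)^2*(p.2:ℤ)^4)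
        = ∑ p ∈ n.divisorsAntidiagonal,
          (2*(p.2:ℤ)^2*(p.1:ℤ)^3 - 2*(p.2:ℤ)^2*(p.1:ℤ)^4) := by
      rw [Nat.sum_divisorsAntidiagonal
          (fun i j => (2*(i:ℤ)^2*(j:ℤ)^3 - 2*(i:ℤ)^2*(j:ℤ)^4)),
        Nat.sum_divisorsAntidiagonal'
          (fun i j => (2*(j:ℤ)^2*(i:ℤ)^3 - 2*(j:ℤ)^2*(i:ℤ)^4))]
    have hsig : ∑ p ∈ n.divisorsAntidiagonal, (-2 * (n:ℤ)^2 * ((n:ℤ) - 1) * (p.1:ℤ))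
        = -2 * (n : ℤ)^2 * ((n : ℤ) - 1) * (ArithmeticFunction.sigma 1 n : ℤ) := by
      rw [← Finset.mul_sum]
      congr 1
      rw [ArithmeticFunction.sigma_one_apply]
      push_cast
      exact Nat.sum_divisorsAntidiagonal (fun i _ => (i : ℤ))
    rw [hswap, hsig]
    ring
  -- put everything together
  rw [htau1] at hsplit1
  rw [htauV1'] at hsplitV1
  rw [htauV2'] at hsplitV2
  rw [hsplit1]
  linarith [hkey2, hsplitV1, hsplitV2, hdiag, hdivsum]

end ChazyAux

/-- The arithmetical identity
`n²(n−1)σ₁(n) + ∑_{m=1}^{n−1} 12m(5m−3n)σ₁(m)σ₁(n−m) = 0`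
obtained from the `q`-expansion of Ramanujan's `P` in the Chazy equation. -/
theorem chazy_sigma_identity (n : ℕ) (hn : 1 ≤ n) :
    (n : ℤ) ^ 2 * ((n : ℤ) - 1) * (ArithmeticFunction.sigma 1 n : ℤ)
      + ∑ m ∈ Finset.Ico 1 n,
          12 * (m : ℤ) * (5 * (m : ℤ) - 3 * (n : ℤ)) *
            (ArithmeticFunction.sigma 1 m : ℤ) * (ArithmeticFunction.sigma 1 (n - m) : ℤ)
      = 0 := by
  have h1 := ChazyAux.stepA n
  have h2 := ChazyAux.sum_X_tw n
  rw [h1]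
  linarith
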